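/- Steihaug monotone-norm lemma underlying Algorithm 2: apply the conjugate gradient method to minimize μ(s) = (1/2)sᵀQs + gᵀs, where Q ∈ ℝ^{m×m} is symmetric positive definite and g ∈ ℝ^m, starting from s_0 = 0 with residuals r_k = −(Qs_k + g) and exact CG updates. Then as long as the residuals are nonzero, the Euclidean norms of the iterates are strictly increasing: ‖s_{k+1}‖ > ‖s_k‖ for each k. -/

import Mathlib

open scoped BigOperators Matrix

private lemma dps {m : ℕ} (x : Fin m → ℝ) (hx : x ≠ 0) : 0 < x ⬝ᵥ x := by
  have h2 : 0 ≤ x ⬝ᵥ x := Finset.sum_nonneg fun i _ => mul_self_nonneg _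
  rcases h2.lt_or_eq with h | h
  · exact h
  · exact absurd (dotProduct_self_eq_zero.mp h.symm) hx

private lemma dpnn {m : ℕ} (x : Fin m → ℝ) : 0 ≤ x ⬝ᵥ x :=
  Finset.sum_nonneg fun i _ => mul_self_nonneg _

private lemma qsymm {m : ℕ} (Q : Matrix (Fin m) (Fin m) ℝ) (hQ : Q.IsHermitian)
    (u w : Fin m → ℝ) : u ⬝ᵥ Q.mulVec w = w ⬝ᵥ Q.mulVec u := by
  rw [Matrix.dotProduct_mulVec, ← Matrix.mulVec_transpose, dotProduct_comm]
  congr 1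
  rw [← Matrix.conjTranspose_eq_transpose_of_trivial, hQ.eq]

private lemma cg_master {m : ℕ}
    (Q : Matrix (Fin m) (Fin m) ℝ) (hQsymm : Q.IsHermitian) (hQpd : Q.PosDef)
    (g : Fin m → ℝ)
    (s r d : ℕ → (Fin m → ℝ))
    (hs0 : s 0 = 0) (hr0 : r 0 = -g) (hd0 : d 0 = -g)
    (hs : ∀ k, s (k + 1) = s k + ((r k ⬝ᵥ r k) / (d k ⬝ᵥ Q.mulVec (d k))) • d k)
    (hr : ∀ k, r (k + 1) = r k - ((r k ⬝ᵥ r k) / (d k ⬝ᵥ Q.mulVec (d k))) • Q.mulVec (d k))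
    (hd : ∀ k, d (k + 1) = r (k + 1) + ((r (k + 1) ⬝ᵥ r (k + 1)) / (r k ⬝ᵥ r k)) • d k) :
    ∀ k : ℕ, (∀ j ≤ k, r j ≠ 0) →
      (∀ i ≤ k, r i ⬝ᵥ d i = r i ⬝ᵥ r i) ∧
      (∀ i j : ℕ, i < j → j ≤ k + 1 → r j ⬝ᵥ d i = 0) ∧
      (∀ i j : ℕ, i < j → j ≤ k + 1 → r j ⬝ᵥ r i = 0) ∧
      (∀ i j : ℕ, i < j → j ≤ k → d j ⬝ᵥ Q.mulVec (d i) = 0) ∧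
      0 ≤ s k ⬝ᵥ d k := by
  -- generic expansion helpers
  have hRD : ∀ j i, r (j + 1) ⬝ᵥ d i
      = r j ⬝ᵥ d i - ((r j ⬝ᵥ r j) / (d j ⬝ᵥ Q.mulVec (d j))) * (d j ⬝ᵥ Q.mulVec (d i)) := by
    intro j i
    rw [hr j]
    simp only [sub_dotProduct, smul_dotProduct, smul_eq_mul]
    rw [dotProduct_comm (Q.mulVec (d j)) (d i), qsymm Q hQsymm (d i) (d j)]
  have hQexp : ∀ (u : Fin m → ℝ) (j : ℕ),
      ((r j ⬝ᵥ r j) / (d j ⬝ᵥ Q.mulVec (d j))) * (u ⬝ᵥ Q.mulVec (d j))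
        = u ⬝ᵥ r j - u ⬝ᵥ r (j + 1) := by
    intro u j
    have h : u ⬝ᵥ (((r j ⬝ᵥ r j) / (d j ⬝ᵥ Q.mulVec (d j))) • Q.mulVec (d j))
        = u ⬝ᵥ (r j - r (j + 1)) := by
      congr 1
      rw [hr j]; abel
    simpa [dotProduct_smul, dotProduct_sub, smul_eq_mul] using h
  intro k
  induction k with
  | zero =>
    intro hne
    have hr0ne : r 0 ≠ 0 := hne 0 le_rfl
    have hrd0 : r 0 ⬝ᵥ d 0 = r 0 ⬝ᵥ r 0 := by rw [hr0, hd0]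
    have hd0ne : d 0 ≠ 0 := by rw [hd0, ← hr0]; exact hr0ne
    have hc0 : (0:ℝ) < d 0 ⬝ᵥ Q.mulVec (d 0) := (by simpa using hQpd.dotProduct_mulVec_pos hd0ne)
    have hrd10 : r 1 ⬝ᵥ d 0 = 0 := by
      have hrdd : d 0 ⬝ᵥ Q.mulVec (d 0) ≠ 0 := hc0.ne'
      rw [hRD 0 0, hrd0]
      field_simp
      ring
    refine ⟨?_, ?_, ?_, ?_, ?_⟩
    · intro i hi; interval_cases i; exact hrd0
    · intro i j hij hj
      have : i = 0 ∧ j = 1 := by omega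
      obtain ⟨rfl, rfl⟩ := this
      exact hrd10
    · intro i j hij hj
      have : i = 0 ∧ j = 1 := by omega
      obtain ⟨rfl, rfl⟩ := this
      rw [show r 0 = d 0 by rw [hr0, hd0]]
      exact hrd10
    · intro i j hij hj; omega
    · rw [hs0]; simp
  | succ k ih =>
    intro hne
    obtain ⟨Hrd, Hd, Hr, Hc, Hsd⟩ := ih (fun j hj => hne j (hj.trans (Nat.le_succ k)))
    have hrr : ∀ i ≤ k + 1, (0:ℝ) < r i ⬝ᵥ r i := fun i hi => dps _ (hne i hi)
    have hdne : ∀ i ≤ k, d i ≠ 0 := by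
      intro i hi h0
      have h := Hrd i hi
      rw [h0, dotProduct_zero] at h
      exact (hrr i (hi.trans (Nat.le_succ k))).ne' h.symm
    have hc : ∀ i ≤ k, (0:ℝ) < d i ⬝ᵥ Q.mulVec (d i) := fun i hi => (by simpa using hQpd.dotProduct_mulVec_pos (hdne i hi))
    have hω : ∀ i ≤ k, (0:ℝ) < (r i ⬝ᵥ r i) / (d i ⬝ᵥ Q.mulVec (d i)) :=
      fun i hi => div_pos (hrr i (hi.trans (Nat.le_succ k))) (hc i hi)
    -- rd at k+1
    have hrdk1 : r (k + 1) ⬝ᵥ d (k + 1) = r (k + 1) ⬝ᵥ r (k + 1) := by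
      rw [hd k]
      simp only [dotProduct_add, dotProduct_smul, smul_eq_mul]
      rw [Hd k (k + 1) (Nat.lt_succ_self k) le_rfl]
      ring
    have hdk1ne : d (k + 1) ≠ 0 := by
      intro h0
      rw [h0, dotProduct_zero] at hrdk1
      exact (hrr (k + 1) le_rfl).ne' hrdk1.symm
    have hck1 : (0:ℝ) < d (k + 1) ⬝ᵥ Q.mulVec (d (k + 1)) := (by simpa using hQpd.dotProduct_mulVec_pos hdk1ne)
    -- conjugacy up to k+1
    have Hc' : ∀ i j : ℕ, i < j → j ≤ k + 1 → d j ⬝ᵥ Q.mulVec (d i) = 0 := by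
      intro i j hij hj
      rcases Nat.lt_or_ge j (k + 1) with h | h
      · exact Hc i j hij (Nat.lt_succ_iff.mp h)
      · have hjk : j = k + 1 := le_antisymm hj h
        subst hjk
        have hik : i ≤ k := Nat.lt_succ_iff.mp hij
        rw [hd k]
        simp only [add_dotProduct, smul_dotProduct, smul_eq_mul]
        rcases Nat.lt_or_ge i k with hik' | hik'
        · have h1 : r (k + 1) ⬝ᵥ Q.mulVec (d i) = 0 := by
            have he := hQexp (r (k + 1)) i
            rw [Hr i (k + 1) (by omega) le_rfl, Hr (i + 1) (k + 1) (by omega) le_rfl] at he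
            have hωne := (hω i hik).ne'
            have := he
            rw [sub_zero] at this
            exact (mul_eq_zero.mp this).resolve_left hωne
          rw [h1, Hc i k hik' le_rfl]
          ring
        · have hik'' : i = k := le_antisymm hik hik'
          rw [hik'']
          have he := hQexp (r (k + 1)) k
          rw [Hr k (k + 1) (by omega) le_rfl, zero_sub] at he
          have hbne := (hrr k (Nat.le_succ k)).ne'
          have hcne := (hc k le_rfl).ne'
          field_simp at he ⊢
          nlinarith [he]
    -- orthogonality r against d, up to k+2
    have Hd' : ∀ i j : ℕ, i < j → j ≤ k + 2 → r j ⬝ᵥ d i = 0 := by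
      intro i j hij hj
      rcases Nat.lt_or_ge j (k + 2) with h | h
      · exact Hd i j hij (by omega)
      · have hjk : j = k + 2 := le_antisymm hj h
        subst hjk
        have hik : i ≤ k + 1 := by omega
        rw [hRD (k + 1) i]
        rcases Nat.lt_or_ge i (k + 1) with hik' | hik'
        · rw [Hd i (k + 1) hik' le_rfl, Hc' i (k + 1) hik' le_rfl]
          ring
        · have : i = k + 1 := le_antisymm hik hik'
          subst this
          rw [hrdk1]
          field_simp
          ring
    -- orthogonality of residuals, up to k+2
    have Hr' : ∀ i j : ℕ, i < j → j ≤ k + 2 → r j ⬝ᵥ r i = 0 := by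
      intro i j hij hj
      rcases Nat.lt_or_ge j (k + 2) with h | h
      · exact Hr i j hij (by omega)
      · have hjk : j = k + 2 := le_antisymm hj h
        subst hjk
        cases i with
        | zero =>
          rw [show r 0 = d 0 by rw [hr0, hd0]]
          exact Hd' 0 (k + 2) (by omega) le_rfl
        | succ n =>
          have hri : r (n + 1) = d (n + 1) - ((r (n + 1) ⬝ᵥ r (n + 1)) / (r n ⬝ᵥ r n)) • d n := by
            rw [hd n]; abel
          rw [hri]
          simp only [dotProduct_sub, dotProduct_smul, smul_eq_mul]
          rw [Hd' (n + 1) (k + 2) hij le_rfl, Hd' n (k + 2) (by omega) le_rfl]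
          ring
    -- s (k+1) ⬝ d (k+1) ≥ 0
    have hsr : ∀ j ≤ k + 1, s j ⬝ᵥ r (k + 1) = 0 := by
      intro j hj
      induction j with
      | zero => rw [hs0]; simp
      | succ n ihn =>
        rw [hs n]
        simp only [add_dotProduct, smul_dotProduct, smul_eq_mul]
        rw [ihn (by omega), dotProduct_comm (d n) (r (k + 1)),
          Hd n (k + 1) (by omega) le_rfl]
        ring
    have hsd1 : 0 ≤ s (k + 1) ⬝ᵥ d k := by
      rw [hs k]
      simp only [add_dotProduct, smul_dotProduct, smul_eq_mul]
      exact add_nonneg Hsd (mul_nonneg (hω k le_rfl).le (dpnn _))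
    have hsdk1 : 0 ≤ s (k + 1) ⬝ᵥ d (k + 1) := by
      rw [hd k]
      simp only [dotProduct_add, dotProduct_smul, smul_eq_mul]
      rw [hsr (k + 1) le_rfl, zero_add]
      exact mul_nonneg (div_nonneg (dpnn _) (hrr k (Nat.le_succ k)).le) hsd1
    refine ⟨?_, Hd', Hr', Hc', hsdk1⟩
    intro i hi
    rcases Nat.lt_or_ge i (k + 1) with h | h
    · exact Hrd i (by omega)
    · have : i = k + 1 := le_antisymm hi h
      subst this
      exact hrdk1

/-- Steihaug monotone-norm lemma: in the conjugate gradient method applied to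
`μ(s) = (1/2)sᵀQs + gᵀs` with `Q` symmetric positive definite, started from `s₀ = 0`
with `r₀ = d₀ = -g` and the exact CG updates, the Euclidean norms of the iterates are
strictly increasing as long as the residuals are nonzero. -/
theorem cg_steihaug_norm_strict_mono {m : ℕ}
    (Q : Matrix (Fin m) (Fin m) ℝ) (hQsymm : Q.IsHermitian) (hQpd : Q.PosDef)
    (g : Fin m → ℝ)
    (s r d : ℕ → (Fin m → ℝ))
    (hs0 : s 0 = 0) (hr0 : r 0 = -g) (hd0 : d 0 = -g)
    (hs : ∀ k, s (k + 1) = s k + ((r k ⬝ᵥ r k) / (d k ⬝ᵥ Q.mulVec (d k))) • d k)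
    (hr : ∀ k, r (k + 1) = r k - ((r k ⬝ᵥ r k) / (d k ⬝ᵥ Q.mulVec (d k))) • Q.mulVec (d k))
    (hd : ∀ k, d (k + 1) = r (k + 1) + ((r (k + 1) ⬝ᵥ r (k + 1)) / (r k ⬝ᵥ r k)) • d k) :
    ∀ k : ℕ, (∀ j ≤ k, r j ≠ 0) →
      Real.sqrt (s k ⬝ᵥ s k) < Real.sqrt (s (k + 1) ⬝ᵥ s (k + 1)) := by
  intro k hne
  obtain ⟨Hrd, Hd, Hr, Hc, Hsd⟩ :=
    cg_master Q hQsymm hQpd g s r d hs0 hr0 hd0 hs hr hd k hne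
  have hrkne : r k ≠ 0 := hne k le_rfl
  have hrrk : (0:ℝ) < r k ⬝ᵥ r k := dps _ hrkne
  have hdkne : d k ≠ 0 := by
    intro h0
    have h := Hrd k le_rfl
    rw [h0, dotProduct_zero] at h
    exact hrrk.ne' h.symm
  have hck : (0:ℝ) < d k ⬝ᵥ Q.mulVec (d k) := (by simpa using hQpd.dotProduct_mulVec_pos hdkne)
  have hωk : (0:ℝ) < (r k ⬝ᵥ r k) / (d k ⬝ᵥ Q.mulVec (d k)) := div_pos hrrk hck
  have key : s k ⬝ᵥ s k < s (k + 1) ⬝ᵥ s (k + 1) := by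
    rw [hs k]
    simp only [add_dotProduct, dotProduct_add, smul_dotProduct,
      dotProduct_smul, smul_eq_mul]
    rw [dotProduct_comm (d k) (s k)]
    nlinarith [mul_pos hωk (mul_pos hωk (dps (d k) hdkne)),
      mul_nonneg hωk.le Hsd, dps (d k) hdkne]
  exact Real.sqrt_lt_sqrt (dpnn _) key
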